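/- For a flag-convex curve Γ: I → Lo_n^1 and the dual curve Γ_⋆(t) = P_η (Γ(-t))^{-⊤} P_η, the southwest minors satisfy m_{Γ_⋆, k}(t) = ± m_{Γ, n-k}(-t) for all t; in particular the zeros of m_{Γ_⋆, k} on -I correspond bijectively (with multiplicity) to the zeros of m_{Γ, n-k} on I. -/

import Mathlib

open Matrix

variable (n : ℕ)

/-- Lower triangular with unit diagonal (`Lo_n^1`). -/
def unitri (L : Matrix (Fin n) (Fin n) ℝ) : Prop :=
  (∀ i, L i i = 1) ∧ ∀ i j : Fin n, (i : ℕ) < (j : ℕ) → L i j = 0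

/-- The set `𝒥`: strictly positive entries on the subdiagonal, zero elsewhere. -/
def inJ (A : Matrix (Fin n) (Fin n) ℝ) : Prop :=
  ∀ i j : Fin n, ((i : ℕ) = (j : ℕ) + 1 → 0 < A i j) ∧ ((i : ℕ) ≠ (j : ℕ) + 1 → A i j = 0)

/-- The permutation matrix of the top permutation: `(P_η)_{i, n+1-i} = 1`. -/
def Peta : Matrix (Fin n) (Fin n) ℝ :=
  Matrix.of fun i j => if (i : ℕ) + (j : ℕ) + 1 = n then 1 else 0

/-- The southwest `k × k` minor: the submatrix on the last `k` rows and first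
`k` columns. -/
def swminor (L : Matrix (Fin n) (Fin n) ℝ) (k : ℕ) (hk : k ≤ n) :
    Matrix (Fin k) (Fin k) ℝ :=
  L.submatrix (fun i : Fin k => (⟨n - k + (i : ℕ), by have := i.isLt; omega⟩ : Fin n))
    (fun j : Fin k => (⟨(j : ℕ), by have := j.isLt; omega⟩ : Fin n))

lemma Peta_mul_apply (A : Matrix (Fin n) (Fin n) ℝ) (i j : Fin n) :
    (Peta n * A) i j = A ⟨n - 1 - (i : ℕ), by have := i.isLt; omega⟩ j := by
  rw [mul_apply]
  rw [Finset.sum_eq_single (⟨n - 1 - (i : ℕ), by have := i.isLt; omega⟩ : Fin n)]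
  · have := i.isLt
    simp only [Peta, of_apply]
    rw [if_pos (by omega), one_mul]
  · intro b _ hb
    have hb' : ¬((i : ℕ) + (b : ℕ) + 1 = n) := by
      intro h; apply hb; apply Fin.ext; simp; omega
    simp only [Peta, of_apply]
    rw [if_neg hb', zero_mul]
  · intro h; exact absurd (Finset.mem_univ _) h

lemma mul_Peta_apply (A : Matrix (Fin n) (Fin n) ℝ) (i j : Fin n) :
    (A * Peta n) i j = A i ⟨n - 1 - (j : ℕ), by have := j.isLt; omega⟩ := by
  rw [mul_apply]
  rw [Finset.sum_eq_single (⟨n - 1 - (j : ℕ), by have := j.isLt; omega⟩ : Fin n)]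
  · have := j.isLt
    simp only [Peta, of_apply]
    rw [if_pos (by omega), mul_one]
  · intro b _ hb
    have hb' : ¬((b : ℕ) + (j : ℕ) + 1 = n) := by
      intro h; apply hb; apply Fin.ext; simp; omega
    simp only [Peta, of_apply]
    rw [if_neg hb', mul_zero]
  · intro h; exact absurd (Finset.mem_univ _) h

def dualPerm (k : ℕ) (hk : k ≤ n) : Equiv.Perm (Fin n) where
  toFun j := ⟨if (j : ℕ) < k then (j : ℕ) + (n - k) else (j : ℕ) - k,
    by have := j.isLt; split <;> omega⟩
  invFun j := ⟨if (j : ℕ) < n - k then (j : ℕ) + k else (j : ℕ) - (n - k),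
    by have := j.isLt; split <;> omega⟩
  left_inv j := by
    have := j.isLt
    apply Fin.ext
    simp only []
    split_ifs <;> omega
  right_inv j := by
    have := j.isLt
    apply Fin.ext
    simp only []
    split_ifs <;> omega

lemma unitri_det (L : Matrix (Fin n) (Fin n) ℝ) (hL : unitri n L) : L.det = 1 := by
  rw [det_of_lowerTriangular L (fun i j h => hL.2 i j h)]
  simp [hL.1]

lemma swminor_dual_eq (k : ℕ) (hk1 : 1 ≤ k) (hk2 : k ≤ n - 1)
    (L : Matrix (Fin n) (Fin n) ℝ) (hL : unitri n L) :
    (swminor n (Peta n * (L⁻¹)ᵀ * Peta n) k (le_trans hk2 (Nat.sub_le n 1))).det =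
      ((Equiv.Perm.sign (dualPerm n k (le_trans hk2 (Nat.sub_le n 1))) : ℤ) : ℝ) *
        (swminor n L (n - k) (Nat.sub_le n k)).det := by
  have hn2 : 2 ≤ n := by omega
  set p : ℕ := n - k with hp
  have hkn : k ≤ n := by omega
  have hdet : L.det = 1 := unitri_det n L hL
  have hinv : L * L⁻¹ = 1 := mul_nonsing_inv L (by rw [hdet]; exact isUnit_one)
  set N : Matrix (Fin n) (Fin n) ℝ := L⁻¹ with hN
  -- Step B : swminor of Pη Nᵀ Pη equals a reversed transpose of swminor of N
  have hB : (swminor n (Peta n * Nᵀ * Peta n) k hkn).det = (swminor n N k hkn).det := by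
    have hEq : swminor n (Peta n * Nᵀ * Peta n) k hkn =
        ((swminor n N k hkn).submatrix Fin.revPerm Fin.revPerm)ᵀ := by
      ext i j
      have hi := i.isLt; have hj := j.isLt
      simp only [swminor, submatrix_apply, transpose_apply]
      rw [mul_Peta_apply, Peta_mul_apply, transpose_apply]
      simp only [Equiv.coe_fn_mk, Fin.revPerm_apply]
      congr 1 <;> (apply Fin.ext; simp [Fin.val_rev]) <;> omega
    rw [hEq, det_transpose, det_submatrix_equiv_self]
  -- the auxiliary matrix S
  set S : Matrix (Fin n) (Fin n) ℝ := Matrix.of (fun i j =>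
    if h : (j : ℕ) < p then (if (i : ℕ) = (j : ℕ) then (1:ℝ) else 0)
    else N i ⟨(j : ℕ) - p, by have := j.isLt; omega⟩) with hS
  have hpk : p + k = n := by omega
  have hkp : k + p = n := by omega
  let e : Fin p ⊕ Fin k ≃ Fin n := finSumFinEquiv.trans (finCongr hpk)
  let f : Fin k ⊕ Fin p ≃ Fin n := finSumFinEquiv.trans (finCongr hkp)
  -- det S = det swminor(N, k)
  have hSdet : S.det = (swminor n N k hkn).det := by
    rw [← det_submatrix_equiv_self e S]
    have : S.submatrix e e = fromBlocks 1
        (Matrix.of fun (i : Fin p) (j : Fin k) => N ⟨(i : ℕ), by omega⟩ ⟨(j : ℕ), by omega⟩)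
        0 (swminor n N k hkn) := by
      ext i j
      have he1 : ∀ i : Fin p, ((e (Sum.inl i) : Fin n) : ℕ) = (i : ℕ) := by
        intro i; simp [e]
      have he2 : ∀ j : Fin k, ((e (Sum.inr j) : Fin n) : ℕ) = p + (j : ℕ) := by
        intro j; simp [e]
      rcases i with i | i <;> rcases j with j | j <;>
        simp only [submatrix_apply, hS, of_apply, fromBlocks_apply₁₁, fromBlocks_apply₁₂,
          fromBlocks_apply₂₁, fromBlocks_apply₂₂, he1, he2, one_apply, Matrix.zero_apply,
          swminor, Matrix.submatrix_apply]
      · rw [dif_pos j.isLt]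
        simp [Fin.ext_iff]
      · rw [dif_neg (by omega)]
        exact congrArg₂ N (Fin.ext (by simp [he1])) (Fin.ext (by simp [he2]))
      · rw [dif_pos j.isLt, if_neg (by have := j.isLt; omega)]
      · rw [dif_neg (by omega)]
        exact congrArg₂ N (Fin.ext (by simp [he2]; omega)) (Fin.ext (by simp [he2]))
    rw [this, det_fromBlocks_zero₂₁, det_one, one_mul]
  set π : Equiv.Perm (Fin n) := dualPerm n k hkn with hπ
  -- entries of L * S
  have hLS : ∀ i j : Fin n, (L * S) i j =
      if h : (j : ℕ) < p then L i ⟨(j : ℕ), by have := j.isLt; omega⟩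
      else (if (i : ℕ) = (j : ℕ) - p then (1:ℝ) else 0) := by
    intro i j
    by_cases h : (j : ℕ) < p
    · rw [dif_pos h, mul_apply]
      rw [Finset.sum_eq_single (⟨(j : ℕ), by have := j.isLt; omega⟩ : Fin n)]
      · rw [hS]; simp only [of_apply]
        rw [dif_pos h]
        simp
      · intro b _ hb
        rw [hS]; simp only [of_apply]
        rw [dif_pos h, if_neg (by intro hh; exact hb (Fin.ext hh)), mul_zero]
      · intro hh; exact absurd (Finset.mem_univ _) hh
    · rw [dif_neg h]
      have : (L * S) i j = (L * N) i ⟨(j : ℕ) - p, by have := j.isLt; omega⟩ := by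
        rw [mul_apply, mul_apply]
        apply Finset.sum_congr rfl
        intro b _
        rw [hS]; simp only [of_apply]
        rw [dif_neg h]
      rw [this, hN, hinv, one_apply]
      simp [Fin.ext_iff]
  -- det of the permuted product
  have hUdet : (((L * S).submatrix id ⇑π)).det = (swminor n L p (by omega)).det := by
    rw [← det_submatrix_equiv_self f (((L * S)).submatrix id ⇑π)]
    have hf1 : ∀ i : Fin k, ((f (Sum.inl i) : Fin n) : ℕ) = (i : ℕ) := by
      intro i; simp [f]
    have hf2 : ∀ j : Fin p, ((f (Sum.inr j) : Fin n) : ℕ) = k + (j : ℕ) := by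
      intro j; simp [f]
    have hπ1 : ∀ j : Fin k, ((π (f (Sum.inl j)) : Fin n) : ℕ) = (j : ℕ) + p := by
      intro j
      have := j.isLt
      simp only [hπ, dualPerm, Equiv.coe_fn_mk, hf1]
      rw [if_pos this]
    have hπ2 : ∀ j : Fin p, ((π (f (Sum.inr j)) : Fin n) : ℕ) = (j : ℕ) := by
      intro j
      have := j.isLt
      simp only [hπ, dualPerm, Equiv.coe_fn_mk, hf2]
      rw [if_neg (by omega)]
      omega
    have hblock : (((L * S)).submatrix id ⇑π).submatrix f f = fromBlocks 1
        (Matrix.of fun (i : Fin k) (j : Fin p) => L ⟨(i : ℕ), by omega⟩ ⟨(j : ℕ), by omega⟩)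
        0 (swminor n L p (by omega)) := by
      ext i j
      rcases i with i | i <;> rcases j with j | j <;>
        simp only [submatrix_apply, id_eq, hLS, fromBlocks_apply₁₁, fromBlocks_apply₁₂,
          fromBlocks_apply₂₁, fromBlocks_apply₂₂, of_apply, one_apply, Matrix.zero_apply,
          swminor]
      · rw [dif_neg (by rw [hπ1]; omega)]
        rw [hπ1, hf1]
        simp only [Nat.add_sub_cancel]
        simp [Fin.ext_iff]
      · rw [dif_pos (by rw [hπ2]; exact j.isLt)]
        exact congrArg₂ L (Fin.ext (by rw [hf1])) (Fin.ext (by rw [hπ2]))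
      · rw [dif_neg (by rw [hπ1]; omega)]
        rw [hπ1, hf2]
        rw [if_neg (by have := j.isLt; omega)]
      · rw [dif_pos (by rw [hπ2]; exact j.isLt)]
        exact congrArg₂ L (Fin.ext (by simp only [hf2, Fin.val_mk]; omega)) (Fin.ext (by rw [hπ2]))
    rw [hblock, det_fromBlocks_zero₂₁, det_one, one_mul]
  have hperm : (((L * S)).submatrix id ⇑π).det =
      ((Equiv.Perm.sign π : ℤ) : ℝ) * (L * S).det := by
    rw [det_permute']
  have hmul : (L * S).det = (swminor n N k hkn).det := by
    rw [det_mul, hdet, one_mul, hSdet]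
  set s : ℝ := ((Equiv.Perm.sign π : ℤ) : ℝ) with hs
  have hswL : (swminor n L p (by omega)).det = s * (swminor n N k hkn).det := by
    rw [← hUdet, hperm, hmul]
  have hs2 : s * s = 1 := by
    rcases Int.units_eq_one_or (Equiv.Perm.sign π) with h | h <;>
      rw [hs, h] <;> norm_num
  rw [hB, hswL, ← mul_assoc, hs2, one_mul]

/-- for a flag-convex `Γ : I → Lo_n^1` and the dual curve
`Γ_⋆(t) = P_η (Γ(-t))^{-⊤} P_η`, one has `m_{Γ_⋆,k}(t) = ± m_{Γ,n-k}(-t)` (a fixed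
sign), and in particular the zeros of `m_{Γ_⋆,k}` on `-I` correspond to the zeros of
`m_{Γ,n-k}` on `I`. -/
theorem dual_curve_swminor (I : Set ℝ)
    (Γ Γ' : ℝ → Matrix (Fin n) (Fin n) ℝ)
    (hL : ∀ t ∈ I, unitri n (Γ t))
    (hderiv : ∀ t ∈ I, ∀ i j : Fin n, HasDerivAt (fun s => Γ s i j) (Γ' t i j) t)
    (hconv : ∀ t ∈ I, inJ n ((Γ t)⁻¹ * Γ' t))
    (k : ℕ) (hk1 : 1 ≤ k) (hk2 : k ≤ n - 1) :
    ∃ ε : ℝ, (ε = 1 ∨ ε = -1) ∧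
      ∀ t : ℝ, -t ∈ I →
        ((swminor n (Peta n * ((Γ (-t))⁻¹)ᵀ * Peta n) k (by omega)).det =
          ε * (swminor n (Γ (-t)) (n - k) (by omega)).det ∧
        ((swminor n (Peta n * ((Γ (-t))⁻¹)ᵀ * Peta n) k (by omega)).det = 0 ↔
          (swminor n (Γ (-t)) (n - k) (by omega)).det = 0))   := by
  have hkn : k ≤ n := by omega
  refine ⟨((Equiv.Perm.sign (dualPerm n k hkn) : ℤ) : ℝ), ?_, ?_⟩
  · rcases Int.units_eq_one_or (Equiv.Perm.sign (dualPerm n k hkn)) with h | h <;>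
      rw [h] <;> norm_num
  · intro t ht
    have hε : ((Equiv.Perm.sign (dualPerm n k hkn) : ℤ) : ℝ) ≠ 0 := by
      rcases Int.units_eq_one_or (Equiv.Perm.sign (dualPerm n k hkn)) with h | h <;>
        rw [h] <;> norm_num
    have h1 : (swminor n (Peta n * ((Γ (-t))⁻¹)ᵀ * Peta n) k (by omega)).det =
        ((Equiv.Perm.sign (dualPerm n k hkn) : ℤ) : ℝ) *
          (swminor n (Γ (-t)) (n - k) (by omega)).det :=
      swminor_dual_eq n k hk1 hk2 (Γ (-t)) (hL _ ht)
    refine ⟨h1, ?_⟩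
    rw [h1]
    constructor
    · intro hh
      rcases mul_eq_zero.mp hh with hh | hh
      · exact absurd hh hε
      · exact hh
    · intro hh
      rw [hh, mul_zero]
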